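/- Let A = [A_1, …, A_n] be an n×n×n ASHM such that L(A) = ∑_k k·A_k is a Latin square (every row and column of L(A) is a permutation of {1,…,n}). Then each A_k is a permutation matrix, i.e., A is a permutation hypermatrix. -/

import Mathlib

open Finset

/-- A line (vector) of integers is "alternating" in the ASM sense:
all prefix sums are 0 or 1, and the total sum is 1. This is equivalent to the
nonzero entries being ±1, alternating in sign, beginning and ending with +1. -/
def AltLine {n : ℕ} (v : Fin n → ℤ) : Prop :=
  (∀ t : Fin n, (∑ s ∈ Finset.univ.filter (fun s => s ≤ t), v s) = 0 ∨
      (∑ s ∈ Finset.univ.filter (fun s => s ≤ t), v s) = 1) ∧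
  (∑ s, v s) = 1

/-- Alternating sign matrix. -/
def IsAsm {n : ℕ} (A : Matrix (Fin n) (Fin n) ℤ) : Prop :=
  (∀ i, AltLine (fun j => A i j)) ∧ (∀ j, AltLine (fun i => A i j))

/-- Alternating sign hypermatrix: every line in each of the three directions alternates. -/
def IsAshm {n : ℕ} (A : Fin n → Fin n → Fin n → ℤ) : Prop :=
  (∀ j k, AltLine (fun i => A i j k)) ∧
  (∀ i k, AltLine (fun j => A i j k)) ∧
  (∀ i j, AltLine (fun k => A i j k))

/-- The ASHM-Latin square `L(A) = 1·A₁ + 2·A₂ + ⋯ + n·Aₙ` (planes indexed from 1). -/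
def Lmat {n : ℕ} (A : Fin n → Fin n → Fin n → ℤ) (i j : Fin n) : ℤ :=
  ∑ k : Fin n, ((k.1 : ℤ) + 1) * A i j k

/-- Permutation hypermatrix: a (0,1)-hypermatrix with exactly one 1 in each line. -/
def IsPermHyper {n : ℕ} (A : Fin n → Fin n → Fin n → ℤ) : Prop :=
  (∀ i j k : Fin n, A i j k = 0 ∨ A i j k = 1) ∧
  (∀ j k : Fin n, ∃! i : Fin n, A i j k = 1) ∧
  (∀ i k : Fin n, ∃! j : Fin n, A i j k = 1) ∧
  (∀ i j : Fin n, ∃! k : Fin n, A i j k = 1)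

private lemma fin_filter_card {n : ℕ} (q : ℕ → Prop) [DecidablePred q] :
    (Finset.univ.filter (fun s : Fin n => q s.1)).card
      = ((Finset.range n).filter q).card := by
  rw [← Finset.card_map ⟨Fin.val, Fin.val_injective⟩]
  congr 1
  ext x
  simp only [Finset.mem_map, Finset.mem_filter, Finset.mem_univ, true_and,
    Function.Embedding.coeFn_mk, Finset.mem_range]
  constructor
  · rintro ⟨s, hs, rfl⟩; exact ⟨s.2, hs⟩
  · rintro ⟨hx, hp⟩; exact ⟨⟨x, hx⟩, hp, rfl⟩

private lemma card_filter_fin {n : ℕ} (p : Fin n → Prop) [DecidablePred p]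
    (q : ℕ → Prop) [DecidablePred q] (hpq : ∀ s : Fin n, p s ↔ q s.1) :
    (Finset.univ.filter p).card = ((Finset.range n).filter q).card := by
  rw [Finset.filter_congr (fun x _ => by rw [hpq x])]
  exact fin_filter_card q

private lemma line_eu {n : ℕ} (v : Fin n → ℤ) (h01 : ∀ s, v s = 0 ∨ v s = 1)
    (hsum : ∑ s, v s = 1) : ∃! s, v s = 1 := by
  have h1 : ∑ s ∈ Finset.univ.filter (fun s => v s = 1), v s = 1 := by
    rw [Finset.sum_filter_of_ne, hsum]
    intro x _ hx
    rcases h01 x with h | h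
    · exact absurd h hx
    · exact h
  have h2 : ∑ s ∈ Finset.univ.filter (fun s => v s = 1), v s
      = ((Finset.univ.filter (fun s => v s = 1)).card : ℤ) := by
    rw [Finset.sum_congr rfl (fun s hs => (Finset.mem_filter.mp hs).2)]
    simp
  have h3 : (Finset.univ.filter (fun s => v s = 1)).card = 1 := by
    have := h2 ▸ h1
    exact_mod_cast this
  obtain ⟨a, ha⟩ := Finset.card_eq_one.mp h3
  refine ⟨a, ?_, ?_⟩
  · have : a ∈ Finset.univ.filter (fun s => v s = 1) := ha ▸ Finset.mem_singleton_self a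
    exact (Finset.mem_filter.mp this).2
  · intro b hb
    have : b ∈ Finset.univ.filter (fun s => v s = 1) :=
      Finset.mem_filter.mpr ⟨Finset.mem_univ b, hb⟩
    rw [ha, Finset.mem_singleton] at this
    exact this

private def Sp {n : ℕ} (A : Fin n → Fin n → Fin n → ℤ) (i j t : Fin n) : ℤ :=
  ∑ s ∈ Finset.univ.filter (fun s => s ≤ t), A i j s

private def Cf {n : ℕ} (A : Fin n → Fin n → Fin n → ℤ) (i j : Fin n) : ℤ :=
  ∑ t, Sp A i j t

section facts
variable {n : ℕ} (A : Fin n → Fin n → Fin n → ℤ)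

private lemma hS01 (hA : IsAshm A) (i j t : Fin n) : Sp A i j t = 0 ∨ Sp A i j t = 1 :=
  (hA.2.2 i j).1 t

private lemma hC0 (hA : IsAshm A) (i j : Fin n) : 0 ≤ Cf A i j :=
  Finset.sum_nonneg fun t _ => by rcases hS01 A hA i j t with h | h <;> simp [h]

private lemma hCn (hA : IsAshm A) (i j : Fin n) : Cf A i j ≤ n := by
  calc Cf A i j ≤ ∑ _t : Fin n, (1:ℤ) :=
        Finset.sum_le_sum fun t _ => by rcases hS01 A hA i j t with h | h <;> simp [h]
    _ = n := by simp

private lemma hrowsum (hA : IsAshm A) (i : Fin n) (t : Fin n) : ∑ j, Sp A i j t = (t.1 : ℤ) + 1 := by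
  unfold Sp
  rw [Finset.sum_comm]
  have h1 : ∀ s ∈ Finset.univ.filter (fun s : Fin n => s ≤ t),
      ∑ j, A i j s = 1 := fun s _ => (hA.2.1 i s).2
  rw [Finset.sum_congr rfl h1, Finset.sum_const,
    card_filter_fin _ (fun x => x ≤ t.1) (fun s => Fin.le_def)]
  have h2 : (Finset.range n).filter (fun x => x ≤ t.1) = Finset.range (t.1 + 1) := by
    ext x
    simp only [Finset.mem_filter, Finset.mem_range]
    have := t.2
    omega
  rw [h2, Finset.card_range]
  simp

private lemma hLC (hA : IsAshm A) (i j : Fin n) : Lmat A i j + Cf A i j = (n : ℤ) + 1 := by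
  have hCf : Cf A i j = ∑ s : Fin n, ((n : ℤ) - s.1) * A i j s := by
    unfold Cf Sp
    have h1 : ∀ t : Fin n, ∑ s ∈ Finset.univ.filter (fun s => s ≤ t), A i j s
        = ∑ s : Fin n, if s ≤ t then A i j s else 0 := fun t => Finset.sum_filter _ _
    rw [Finset.sum_congr rfl (fun t _ => h1 t), Finset.sum_comm]
    refine Finset.sum_congr rfl fun s _ => ?_
    rw [← Finset.sum_filter, Finset.sum_const,
      card_filter_fin _ (fun x => s.1 ≤ x) (fun t => Fin.le_def)]
    have h2 : (Finset.range n).filter (fun x => s.1 ≤ x) = Finset.Ico s.1 n := by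
      ext x
      simp only [Finset.mem_filter, Finset.mem_range, Finset.mem_Ico]
      omega
    rw [h2, Nat.card_Ico, nsmul_eq_mul]
    have := s.2
    push_cast [Nat.cast_sub (le_of_lt s.2)]
    ring
  rw [hCf, Lmat, ← Finset.sum_add_distrib]
  have h3 : ∀ s : Fin n, ((s.1:ℤ) + 1) * A i j s + ((n : ℤ) - s.1) * A i j s
      = ((n:ℤ) + 1) * A i j s := fun s => by ring
  rw [Finset.sum_congr rfl (fun s _ => h3 s), ← Finset.mul_sum]
  have h4 : ∑ s, A i j s = 1 := (hA.2.2 i j).2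
  rw [h4, mul_one]

end facts

private lemma key {n : ℕ} (A : Fin n → Fin n → Fin n → ℤ) (hA : IsAshm A)
    (hC : ∀ i (m : Fin n), ∃! j, Cf A i j = (n : ℤ) - m.1) :
    ∀ t : ℕ, ∀ ht : t < n, ∀ i j,
      (Sp A i j ⟨t, ht⟩ = 1 ↔ (n : ℤ) - t ≤ Cf A i j) := by
  intro t
  induction t using Nat.strong_induction_on with
  | _ t IH =>
  intro ht i j
  have hbw : ∀ j', (n : ℤ) - t ≤ Cf A i j' → Sp A i j' ⟨t, ht⟩ = 1 := by
    intro j' hcj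
    by_contra hS
    have hS0 : Sp A i j' ⟨t, ht⟩ = 0 := (hS01 A hA i j' _).resolve_right hS
    set c : ℤ := Cf A i j' with hc
    have hc0 : 0 ≤ c := hC0 A hA i j'
    have hcn : c ≤ n := hCn A hA i j'
    have hub : ∀ s : Fin n, Sp A i j' s ≤
        (if ((n : ℤ) - c ≤ (s.1:ℤ) ∧ s.1 < t) ∨ t < s.1 then 1 else 0) := by
      intro s
      rcases lt_trichotomy s.1 t with h1 | h1 | h1
      · rcases hS01 A hA i j' s with h | h
        · rw [h]; split_ifs <;> norm_num
        · have h2 := (IH s.1 h1 (h1.trans ht) i j').mp (by rwa [Fin.eta])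
          rw [if_pos (Or.inl ⟨by linarith, h1⟩), h]
      · have hs : s = ⟨t, ht⟩ := Fin.ext h1
        rw [hs, hS0]
        split_ifs <;> norm_num
      · rw [if_pos (Or.inr h1)]
        rcases hS01 A hA i j' s with h | h <;> simp [h]
    have hsum : c ≤ ∑ s : Fin n,
        (if ((n : ℤ) - c ≤ (s.1:ℤ) ∧ s.1 < t) ∨ t < s.1 then (1:ℤ) else 0) :=
      Finset.sum_le_sum (fun s _ => hub s)
    rw [Finset.sum_boole] at hsum
    rw [card_filter_fin _ (fun x : ℕ => ((n : ℤ) - c ≤ (x:ℤ) ∧ x < t) ∨ t < x)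
      (fun s => Iff.rfl)] at hsum
    have hset : (Finset.range n).filter (fun x : ℕ => ((n : ℤ) - c ≤ (x:ℤ) ∧ x < t) ∨ t < x)
        = Finset.Ico (n - c.toNat) t ∪ Finset.Ico (t+1) n := by
      ext x
      simp only [Finset.mem_filter, Finset.mem_range, Finset.mem_union, Finset.mem_Ico]
      omega
    have hdisj : Disjoint (Finset.Ico (n - c.toNat) t) (Finset.Ico (t+1) n) := by
      rw [Finset.disjoint_left]
      intro x hx1 hx2
      simp only [Finset.mem_Ico] at hx1 hx2
      omega
    rw [hset, Finset.card_union_of_disjoint hdisj, Nat.card_Ico, Nat.card_Ico] at hsum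
    have : ((t - (n - c.toNat) + (n - (t+1)) : ℕ) : ℤ) < c := by omega
    omega
  constructor
  · intro hSt
    by_contra hcj
    push_neg at hcj
    have hlow : ∀ j', (if j' = j ∨ (n:ℤ) - t ≤ Cf A i j' then (1:ℤ) else 0)
        ≤ Sp A i j' ⟨t, ht⟩ := by
      intro j'
      split_ifs with h
      · rcases h with rfl | h
        · exact hSt.ge
        · exact (hbw j' h).ge
      · rcases hS01 A hA i j' ⟨t, ht⟩ with h2 | h2 <;> simp [h2]
    have hsum : ∑ j', (if j' = j ∨ (n:ℤ) - t ≤ Cf A i j' then (1:ℤ) else 0)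
        ≤ (t:ℤ) + 1 := by
      rw [← hrowsum A hA i ⟨t, ht⟩]
      exact Finset.sum_le_sum (fun j' _ => hlow j')
    rw [Finset.sum_boole] at hsum
    have hsplit : Finset.univ.filter (fun j' => j' = j ∨ (n:ℤ) - t ≤ Cf A i j')
        = Finset.univ.filter (fun j' => j' = j)
          ∪ Finset.univ.filter (fun j' => (n:ℤ) - t ≤ Cf A i j') := by
      rw [Finset.filter_or]
    have hdisj2 : Disjoint (Finset.univ.filter (fun j' : Fin n => j' = j))
        (Finset.univ.filter (fun j' => (n:ℤ) - t ≤ Cf A i j')) := by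
      rw [Finset.disjoint_left]
      intro x hx1 hx2
      simp only [Finset.mem_filter] at hx1 hx2
      rw [hx1.2] at hx2
      exact absurd hx2.2 (by linarith)
    -- lower bound the big card
    have hcard2 : t + 1 ≤ (Finset.univ.filter (fun j' => (n:ℤ) - t ≤ Cf A i j')).card := by
      have hf : ∀ m : Fin n, ∃ j', Cf A i j' = (n : ℤ) - m.1 :=
        fun m => ⟨(hC i m).choose, (hC i m).choose_spec.1⟩
      choose f hfspec using hf
      have hinj : ∀ m1 m2 : Fin n, f m1 = f m2 → m1 = m2 := by
        intro m1 m2 h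
        have := hfspec m1
        rw [h, hfspec m2] at this
        have : (m1.1 : ℤ) = m2.1 := by linarith
        exact Fin.ext (by exact_mod_cast this)
      have hmaps : ∀ m ∈ Finset.univ.filter (fun m : Fin n => m.1 ≤ t),
          f m ∈ Finset.univ.filter (fun j' => (n:ℤ) - t ≤ Cf A i j') := by
        intro m hm
        simp only [Finset.mem_filter, Finset.mem_univ, true_and] at hm ⊢
        rw [hfspec m]
        have : (m.1 : ℤ) ≤ t := by exact_mod_cast hm
        linarith
      have hcc := Finset.card_le_card_of_injOn f hmaps
        (fun m1 _ m2 _ h => hinj m1 m2 h)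
      have hcard1 : (Finset.univ.filter (fun m : Fin n => m.1 ≤ t)).card = t + 1 := by
        rw [card_filter_fin _ (fun x => x ≤ t) (fun s => Iff.rfl)]
        have : (Finset.range n).filter (fun x => x ≤ t) = Finset.range (t+1) := by
          ext x
          simp only [Finset.mem_filter, Finset.mem_range]
          omega
        rw [this, Finset.card_range]
      omega
    have hcardj : (Finset.univ.filter (fun j' : Fin n => j' = j)).card = 1 := by
      have : Finset.univ.filter (fun j' : Fin n => j' = j) = {j} := by
        ext x; simp
      rw [this, Finset.card_singleton]
    rw [hsplit, Finset.card_union_of_disjoint hdisj2, hcardj] at hsum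
    have : ((1 + (Finset.univ.filter (fun j' => (n:ℤ) - t ≤ Cf A i j')).card : ℕ) : ℤ)
        ≤ (t:ℤ) + 1 := hsum
    omega
  · exact hbw j

private lemma entries01 {n : ℕ} (A : Fin n → Fin n → Fin n → ℤ) (hA : IsAshm A)
    (hC : ∀ i (m : Fin n), ∃! j, Cf A i j = (n : ℤ) - m.1) :
    ∀ i j k, A i j k = 0 ∨ A i j k = 1 := by
  intro i j k
  obtain ⟨kv, hk⟩ := k
  match kv, hk with
  | 0, hk =>
    have hfe : Finset.univ.filter (fun s : Fin n => s ≤ (⟨0, hk⟩ : Fin n)) = {⟨0, hk⟩} := by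
      ext s
      simp only [Finset.mem_filter, Finset.mem_univ, true_and, Finset.mem_singleton,
        Fin.le_def, Fin.ext_iff]
      omega
    have h1 : Sp A i j ⟨0, hk⟩ = A i j ⟨0, hk⟩ := by
      rw [Sp, hfe, Finset.sum_singleton]
    have := hS01 A hA i j ⟨0, hk⟩
    rwa [h1] at this
  | m + 1, hk =>
    have hm : m < n := by omega
    have hfe : Finset.univ.filter (fun s : Fin n => s ≤ (⟨m+1, hk⟩ : Fin n))
        = insert (⟨m+1, hk⟩ : Fin n)
            (Finset.univ.filter (fun s : Fin n => s ≤ (⟨m, hm⟩ : Fin n))) := by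
      ext s
      simp only [Finset.mem_filter, Finset.mem_univ, true_and, Finset.mem_insert,
        Fin.le_def, Fin.ext_iff]
      omega
    have hstep : Sp A i j ⟨m+1, hk⟩ = A i j ⟨m+1, hk⟩ + Sp A i j ⟨m, hm⟩ := by
      rw [Sp, hfe, Finset.sum_insert (by simp [Fin.le_def])]
      rfl
    rcases hS01 A hA i j ⟨m+1, hk⟩ with h1 | h1 <;> rcases hS01 A hA i j ⟨m, hm⟩ with h2 | h2
    · left; rw [h1, h2] at hstep; linarith
    · -- S_{m+1} = 0, S_m = 1 : impossible
      exfalso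
      have hge := (key A hA hC m hm i j).mp h2
      have : Sp A i j ⟨m+1, hk⟩ = 1 := by
        apply (key A hA hC (m+1) hk i j).mpr
        push_cast
        push_cast at hge
        linarith
      rw [h1] at this
      exact absurd this (by norm_num)
    · right; rw [h1, h2] at hstep; linarith
    · left; rw [h1, h2] at hstep; linarith

theorem stmt6 {n : ℕ} (A : Fin n → Fin n → Fin n → ℤ) (hA : IsAshm A)
    (hrow : ∀ i : Fin n, ∀ m : Fin n, ∃! j : Fin n, Lmat A i j = (m.1 : ℤ) + 1)
    (hcol : ∀ j : Fin n, ∀ m : Fin n, ∃! i : Fin n, Lmat A i j = (m.1 : ℤ) + 1) :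
    IsPermHyper A := by
  have hC : ∀ i (m : Fin n), ∃! j, Cf A i j = (n : ℤ) - m.1 := by
    intro i m
    obtain ⟨j, hj, hju⟩ := hrow i m
    exact ⟨j, by have := hLC A hA i j; linarith,
      fun y hy => hju y (by have := hLC A hA i y; linarith)⟩
  have e01 := entries01 A hA hC
  refine ⟨e01, ?_, ?_, ?_⟩
  · intro j k
    exact line_eu (fun i => A i j k) (fun i => e01 i j k) (hA.1 j k).2
  · intro i k
    exact line_eu (fun j => A i j k) (fun j => e01 i j k) (hA.2.1 i k).2
  · intro i j
    exact line_eu (fun k => A i j k) (fun k => e01 i j k) (hA.2.2 i j).2
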